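/- Let (f, φ) be a measurable lens between standard Borel spaces X and Y, let p be a probability measure on X, let s be a probability measure on Y × Y with first marginal f♯p, and let s' be a probability measure on Y × Y whose first marginal equals the second marginal of s. Let p' denote the second marginal of the lifted coupling L(p,s) (so f♯p' equals the first marginal of s'). Then liftings preserve composition: L(p', s') ∘ L(p, s) = L(p, s' ∘ s), where ∘ denotes composition of couplings. -/

import Mathlib

open MeasureTheory ProbabilityTheory

/-- The composite `t ∘ s` of couplings: push `q ⊗ (s⃖ ×ₖ t⃗)` onto the outer two coordinates,
where `q = s.snd` is the middle measure. -/
noncomputable def coupComp {Z : Type*} [MeasurableSpace Z] [StandardBorelSpace Z] [Nonempty Z]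
    (t s : Measure (Z × Z)) [IsFiniteMeasure s] [IsFiniteMeasure t] :
    Measure (Z × Z) :=
  (s.snd.compProd ((s.map Prod.swap).condKernel ×ₖ t.condKernel)).map Prod.snd

instance coupComp.instIsFiniteMeasure {Z : Type*} [MeasurableSpace Z] [StandardBorelSpace Z]
    [Nonempty Z] (t s : Measure (Z × Z)) [IsFiniteMeasure s] [IsFiniteMeasure t] :
    IsFiniteMeasure (coupComp t s) := by
  unfold coupComp; infer_instance

variable {X Y : Type*} [MeasurableSpace X] [StandardBorelSpace X] [Nonempty X]
  [MeasurableSpace Y] [StandardBorelSpace Y] [Nonempty Y]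

/-- The lifted coupling `L(p,s)` associated to a (measurable) lens `(f, φ)`: the
composition-product of `p` with the Markov kernel sending `x` to the pushforward of
`s⃗(·| f x)` along `y ↦ φ(x, y)`. -/
noncomputable def liftCoup {f : X → Y} (hf : Measurable f) {φ : X × Y → X}
    (_hφ : Measurable φ) (p : Measure X) [SFinite p]
    (s : Measure (Y × Y)) [IsFiniteMeasure s] : Measure (X × X) :=
  p.compProd ((Kernel.deterministic (id : X → X) measurable_id ×ₖ
    s.condKernel.comap f hf).map φ)

instance liftCoup.instIsFiniteMeasure {f : X → Y} (hf : Measurable f) {φ : X × Y → X}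
    (hφ : Measurable φ) (p : Measure X) [IsFiniteMeasure p]
    (s : Measure (Y × Y)) [IsFiniteMeasure s] :
    IsFiniteMeasure (liftCoup hf hφ p s) := by
  unfold liftCoup; infer_instance

lemma coupComp_congr_left {Z : Type*} [MeasurableSpace Z] [StandardBorelSpace Z]
    [Nonempty Z] {t₁ t₂ s : Measure (Z × Z)} [IsFiniteMeasure s] [IsFiniteMeasure t₁]
    [IsFiniteMeasure t₂] (h : t₁ = t₂) : coupComp t₁ s = coupComp t₂ s := by
  subst h; rfl

lemma liftCoup_congr {f : X → Y} (hf : Measurable f) {φ : X × Y → X}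
    (hφ : Measurable φ) (p : Measure X) [SFinite p]
    {s₁ s₂ : Measure (Y × Y)} [IsFiniteMeasure s₁] [IsFiniteMeasure s₂] (h : s₁ = s₂) :
    liftCoup hf hφ p s₁ = liftCoup hf hφ p s₂ := by
  subst h; rfl

/-- Composition with a coupling of the form `s.snd ⊗ₘ η`. -/
lemma coupComp_compProd {Z : Type*} [MeasurableSpace Z] [StandardBorelSpace Z]
    [Nonempty Z] (s : Measure (Z × Z)) [IsFiniteMeasure s]
    (η : Kernel Z Z) [IsMarkovKernel η] :
    coupComp (s.snd.compProd η) s = s.fst.compProd (η ∘ₖ s.condKernel) := by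
  set t : Measure (Z × Z) := s.snd.compProd η with ht_def
  have htfst : t.fst = s.snd := Measure.fst_compProd _ _
  have ht : ∀ᵐ y ∂s.snd, η y = t.condKernel y := by
    have h := eq_condKernel_of_measure_eq_compProd (ρ := t) η (by rw [htfst])
    rwa [htfst] at h
  ext E hE
  rw [coupComp, Measure.map_apply measurable_snd hE,
    Measure.compProd_apply (measurable_snd hE)]
  set σ := (s.map Prod.swap).condKernel with hσ_def
  have hstep1 : ∫⁻ y, ((σ ×ₖ t.condKernel) y) (Prod.mk y ⁻¹' (Prod.snd ⁻¹' E)) ∂s.snd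
      = ∫⁻ y, ∫⁻ a, η y (Prod.mk a ⁻¹' E) ∂σ y ∂s.snd := by
    refine lintegral_congr_ae ?_
    filter_upwards [ht] with y hy
    have hpre : Prod.mk y ⁻¹' (Prod.snd ⁻¹' E) = E := rfl
    rw [Kernel.prod_apply, hpre, ← hy, Measure.prod_apply hE]
  rw [hstep1]
  have hmeas_g : Measurable (fun z : Z × Z => η z.2 (Prod.mk z.1 ⁻¹' E)) := by
    have ht' : MeasurableSet {q : (Z × Z) × Z | (q.1.1, q.2) ∈ E} :=
      (measurable_fst.fst.prodMk measurable_snd) hE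
    exact Kernel.measurable_kernel_prodMk_left
      (κ := η.comap Prod.snd measurable_snd) ht'
  have hmeas_g' : Measurable (fun z : Z × Z => η z.1 (Prod.mk z.2 ⁻¹' E)) :=
    hmeas_g.comp measurable_swap
  have hswap : s.snd.compProd σ = s.map Prod.swap := by
    conv_rhs => rw [← Measure.disintegrate (s.map Prod.swap) (s.map Prod.swap).condKernel]
    rw [Measure.fst_map_swap]
  have hstep2 : ∫⁻ y, ∫⁻ a, η y (Prod.mk a ⁻¹' E) ∂σ y ∂s.snd
      = ∫⁻ z : Z × Z, η z.1 (Prod.mk z.2 ⁻¹' E) ∂(s.map Prod.swap) := by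
    rw [← hswap, Measure.lintegral_compProd hmeas_g']
  rw [hstep2, lintegral_map hmeas_g' measurable_swap]
  simp only [Prod.fst_swap, Prod.snd_swap]
  have hstep3 : ∫⁻ z : Z × Z, η z.2 (Prod.mk z.1 ⁻¹' E) ∂s
      = ∫⁻ a, ∫⁻ y, η y (Prod.mk a ⁻¹' E) ∂s.condKernel a ∂s.fst := by
    conv_lhs => rw [← Measure.disintegrate s s.condKernel]
    rw [Measure.lintegral_compProd hmeas_g]
  rw [hstep3, Measure.compProd_apply hE]
  refine lintegral_congr fun a => ?_
  rw [Kernel.comp_apply' _ _ _ (measurable_prodMk_left hE)]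

theorem liftCoup_comp (f : X → Y) (hf : Measurable f)
    (φ : X × Y → X) (hφ : Measurable φ)
    (hlens1 : ∀ (x : X) (y : Y), f (φ (x, y)) = y)
    (hlens2 : ∀ x : X, φ (x, f x) = x)
    (hlens3 : ∀ (x : X) (y y' : Y), φ (φ (x, y), y') = φ (x, y'))
    (p : Measure X) [IsProbabilityMeasure p]
    (s s' : Measure (Y × Y)) [IsProbabilityMeasure s] [IsProbabilityMeasure s']
    (hs : s.fst = p.map f) (hs' : s'.fst = s.snd) :
    coupComp (liftCoup hf hφ ((liftCoup hf hφ p s).snd) s') (liftCoup hf hφ p s) =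
      liftCoup hf hφ p (coupComp s' s) := by
  -- the lift kernels
  set κs : Kernel X X := (Kernel.deterministic (id : X → X) measurable_id ×ₖ
    s.condKernel.comap f hf).map φ with hκs_def
  set κ' : Kernel X X := (Kernel.deterministic (id : X → X) measurable_id ×ₖ
    s'.condKernel.comap f hf).map φ with hκ'_def
  haveI : IsMarkovKernel κs := Kernel.IsMarkovKernel.map _ hφ
  haveI : IsMarkovKernel κ' := Kernel.IsMarkovKernel.map _ hφ
  have hlift_apply : ∀ (u : Measure (Y × Y)) [IsFiniteMeasure u], ∀ a : X,
      ((Kernel.deterministic (id : X → X) measurable_id ×ₖ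
        u.condKernel.comap f hf).map φ) a
      = (u.condKernel (f a)).map (fun y => φ (a, y)) := by
    intro u _ a
    rw [Kernel.map_apply _ hφ, Kernel.prod_apply, Kernel.deterministic_apply,
      Kernel.comap_apply, id_eq, Measure.dirac_prod,
      Measure.map_map hφ measurable_prodMk_left]
    rfl
  set L : Measure (X × X) := liftCoup hf hφ p s with hL_def
  have hLc : L = p.compProd κs := rfl
  have hLfst : L.fst = p := by rw [hLc]; exact Measure.fst_compProd _ _
  -- rewrite LHS using coupComp_compProd
  have hLHS : coupComp (liftCoup hf hφ (L.snd) s') L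
      = p.compProd (κ' ∘ₖ L.condKernel) := by
    have h := coupComp_compProd L κ'
    rw [hLfst] at h
    exact (coupComp_congr_left (rfl : liftCoup hf hφ (L.snd) s'
      = liftCoup hf hφ (L.snd) s')).trans h
  rw [hLHS]
  -- rewrite the composite coupling on the right
  set ξ : Kernel Y Y := s'.condKernel ∘ₖ s.condKernel with hξ_def
  have hs'eq : s' = s.snd.compProd s'.condKernel := by
    rw [← hs']; exact (Measure.disintegrate s' s'.condKernel).symm
  have hcc : coupComp s' s = s.fst.compProd ξ := by
    exact (coupComp_congr_left hs'eq).trans (coupComp_compProd s s'.condKernel)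
  rw [liftCoup_congr hf hφ p hcc]
  set m : Measure (Y × Y) := s.fst.compProd ξ with hm_def
  have hmfst : m.fst = s.fst := Measure.fst_compProd _ _
  -- a.e. identification of the conditional kernels
  have h1 : ∀ᵐ a ∂p, κs a = L.condKernel a := by
    have h := eq_condKernel_of_measure_eq_compProd (ρ := L) κs (by rw [hLfst]; exact hLc)
    rwa [hLfst] at h
  have h2 : ∀ᵐ z ∂s.fst, ξ z = m.condKernel z := by
    have h := eq_condKernel_of_measure_eq_compProd (ρ := m) ξ (by rw [hmfst])
    rwa [hmfst] at h
  have h2' : ∀ᵐ a ∂p, ξ (f a) = m.condKernel (f a) := by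
    have hae : ae s.fst = ae (p.map f) := by rw [hs]
    exact ae_of_ae_map hf.aemeasurable (h2.filter_mono (le_of_eq hae.symm))
  -- conclude via compProd_congr
  show p.compProd (κ' ∘ₖ L.condKernel) = p.compProd ((Kernel.deterministic (id : X → X)
    measurable_id ×ₖ m.condKernel.comap f hf).map φ)
  refine Measure.compProd_congr ?_
  filter_upwards [h1, h2'] with a ha1 ha2
  rw [Kernel.comp_apply, ← ha1, hlift_apply m a, ← ha2, hξ_def, Kernel.comp_apply]
  have hκs_a : κs a = (s.condKernel (f a)).map (fun y => φ (a, y)) := hlift_apply s a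
  rw [hκs_a]
  -- pointwise identity from the lens laws
  set g : Y → X := fun y => φ (a, y) with hg_def
  have hg : Measurable g := hφ.comp measurable_prodMk_left
  have hκ'g : ∀ y : Y, κ' (g y) = (s'.condKernel y).map g := by
    intro y
    have h := hlift_apply s' (g y)
    rw [hκ'_def, h]
    have h1' : f (g y) = y := hlens1 a y
    have h2'' : (fun y' => φ (g y, y')) = g := by
      funext y'
      exact hlens3 a y y'
    rw [h1', h2'']
  ext E hE
  rw [Measure.bind_apply hE κ'.aemeasurable,
    Measure.map_apply hg hE,
    Measure.bind_apply (hg hE) s'.condKernel.aemeasurable,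
    lintegral_map (κ'.measurable_coe hE) hg]
  refine lintegral_congr fun y => ?_
  rw [hκ'g y, Measure.map_apply hg hE]
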